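/- If a graph G on n vertices (n ≥ d) is minimally Gram locally completable in rank d — meaning the generic completion matrix C_G(p) has rank dn − d(d−1)/2 and no edge can be removed without dropping the rank — then |E(G)| = dn − d(d−1)/2, and moreover every induced subgraph on n' ≥ d vertices has at most dn' − d(d−1)/2 edges. -/

import Mathlib

open Matrix

/-- The completion matrix of the system p_i · ṗ_j + p_j · ṗ_i = 0 over the edges E
(ordered pairs, self-loops allowed). -/
def completionMatrix {n d : ℕ} (E : Finset (Fin n × Fin n)) (p : Fin n → Fin d → ℝ) :
    Matrix {e // e ∈ E} (Fin n × Fin d) ℝ :=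
  Matrix.of fun e kl =>
    (if kl.1 = (e : Fin n × Fin n).1 then p (e : Fin n × Fin n).2 kl.2 else 0) +
    (if kl.1 = (e : Fin n × Fin n).2 then p (e : Fin n × Fin n).1 kl.2 else 0)

section aux

variable {n d : ℕ}

def lowEquiv (d : ℕ) : {q : Fin d × Fin d // q.2 < q.1} ≃ (Σ i : Fin d, Fin i.val) where
  toFun q := ⟨q.1.1, ⟨q.1.2, q.2⟩⟩
  invFun s := ⟨(s.1, ⟨s.2, s.2.2.trans s.1.2⟩), s.2.2⟩
  left_inv _ := rfl
  right_inv _ := rfl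

lemma card_low (d : ℕ) : Fintype.card {q : Fin d × Fin d // q.2 < q.1} = d * (d - 1) / 2 := by
  rw [Fintype.card_congr (lowEquiv d), Fintype.card_sigma]
  simp only [Fintype.card_fin]
  rw [show (∑ x : Fin d, (x:ℕ)) = ∑ i ∈ Finset.range d, i from
    Fin.sum_univ_eq_sum_range (fun i => i) d, Finset.sum_range_id]

/-- skew matrix built from lower-triangular data -/
def Amat (a : {q : Fin d × Fin d // q.2 < q.1} → ℝ) : Matrix (Fin d) (Fin d) ℝ :=
  fun i j => (if h : j < i then a ⟨(i,j),h⟩ else 0) - (if h : i < j then a ⟨(j,i),h⟩ else 0)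

lemma Amat_anti (a : {q : Fin d × Fin d // q.2 < q.1} → ℝ) (i j : Fin d) :
    Amat a i j = - Amat a j i := by
  simp only [Amat]; ring

lemma Amat_add (a b : {q : Fin d × Fin d // q.2 < q.1} → ℝ) :
    Amat (a + b) = Amat a + Amat b := by
  funext i j
  simp only [Amat, Matrix.add_apply, Pi.add_apply]
  split_ifs <;> ring

lemma Amat_smul (c : ℝ) (a : {q : Fin d × Fin d // q.2 < q.1} → ℝ) :
    Amat (c • a) = c • Amat a := by
  funext i j
  simp only [Amat, Matrix.smul_apply, Pi.smul_apply, smul_eq_mul]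
  split_ifs <;> ring

/-- the infinitesimal-rotation kernel vectors -/
noncomputable def Phi (S : Finset (Fin n)) (p : Fin n → Fin d → ℝ) :
    ({q : Fin d × Fin d // q.2 < q.1} → ℝ) →ₗ[ℝ] ((↥S × Fin d) → ℝ) where
  toFun a := fun vk => ∑ j, Amat a vk.2 j * p ↑vk.1 j
  map_add' a b := by
    funext vk
    simp [Amat_add, add_mul, Finset.sum_add_distrib]
  map_smul' c a := by
    funext vk
    simp [Amat_smul, Finset.mul_sum, mul_assoc]

lemma Phi_injective (S : Finset (Fin n)) (p : Fin n → Fin d → ℝ)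
    (hspan : Submodule.span ℝ (p '' ↑S) = ⊤) : Function.Injective (Phi S p) := by
  rw [injective_iff_map_eq_zero]
  intro a ha
  have hker : ∀ v ∈ S, (Amat a).mulVecLin (p v) = 0 := by
    intro v hv
    funext k
    have := congrFun ha (⟨v, hv⟩, k)
    simpa [Phi, mulVecLin, mulVec, dotProduct] using this
  have htop : Submodule.span ℝ (p '' ↑S) ≤ LinearMap.ker (Amat a).mulVecLin := by
    rw [Submodule.span_le]
    rintro x ⟨v, hv, rfl⟩
    exact hker v hv
  rw [hspan, top_le_iff] at htop
  have hA : Amat a = 0 := by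
    funext i j
    have h0 : (Amat a).mulVecLin (Pi.single j 1) = 0 := by
      rw [LinearMap.ker_eq_top] at htop
      exact congrFun (congrArg DFunLike.coe htop) _
    have := congrFun h0 i
    simpa [mulVecLin, mulVec_single] using this
  funext q
  have := congrFun (congrFun hA q.1.1) q.1.2
  have hq := q.2
  simp only [Amat, dif_pos hq, dif_neg (asymm hq), Matrix.zero_apply, sub_zero] at this
  simpa using this

lemma key_card_le (p : Fin n → Fin d → ℝ) (F : Finset (Fin n × Fin n)) (S : Finset (Fin n))
    (hFS : ∀ e ∈ F, e.1 ∈ S ∧ e.2 ∈ S)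
    (hspan : Submodule.span ℝ (p '' ↑S) = ⊤)
    (hind : LinearIndependent ℝ (completionMatrix F p)) :
    F.card ≤ d * S.card - d * (d - 1) / 2 := by
  classical
  -- the column-restricted matrix
  set g : ↥S × Fin d → Fin n × Fin d := fun vk => (↑vk.1, vk.2) with hg
  set M : Matrix {e // e ∈ F} (↥S × Fin d) ℝ := (completionMatrix F p).submatrix id g with hM
  -- extension-by-zero map
  set ext : ((↥S × Fin d) → ℝ) →ₗ[ℝ] ((Fin n × Fin d) → ℝ) :=
    { toFun := fun y wk => if h : wk.1 ∈ S then y (⟨wk.1, h⟩, wk.2) else 0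
      map_add' := by intro y z; funext wk; by_cases h : wk.1 ∈ S <;> simp [h]
      map_smul' := by intro c y; funext wk; by_cases h : wk.1 ∈ S <;> simp [h] } with hext
  have hrow : ∀ e : {e // e ∈ F}, ext (M e) = completionMatrix F p e := by
    rintro ⟨e, he⟩
    obtain ⟨h1, h2⟩ := hFS e he
    funext wk
    by_cases h : wk.1 ∈ S
    · simp [hext, hM, hg, h, completionMatrix, Matrix.submatrix]
    · have hne1 : wk.1 ≠ e.1 := fun hh => h (hh ▸ h1)
      have hne2 : wk.1 ≠ e.2 := fun hh => h (hh ▸ h2)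
      simp [hext, hM, h, completionMatrix, hne1, hne2]
  have hindM : LinearIndependent ℝ M := by
    apply LinearIndependent.of_comp ext
    have : (⇑ext ∘ M) = completionMatrix F p := funext hrow
    rw [this]; exact hind
  have hrk : M.rank = F.card := by
    rw [show M.rank = Fintype.card F from hindM.rank_matrix, Fintype.card_coe]
  -- kernel bound
  have hkerPhi : ∀ a, M.mulVec (Phi S p a) = 0 := by
    intro a
    funext e
    obtain ⟨h1, h2⟩ := hFS e.1 e.2
    have expand : M.mulVec (Phi S p a) e =
        ∑ k, p (e : Fin n × Fin n).2 k * (Phi S p a) (⟨(e : Fin n × Fin n).1, h1⟩, k) +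
        ∑ k, p (e : Fin n × Fin n).1 k * (Phi S p a) (⟨(e : Fin n × Fin n).2, h2⟩, k) := by
      simp only [mulVec, dotProduct, Fintype.sum_prod_type]
      simp only [hM, hg, Matrix.submatrix_apply, id_eq, completionMatrix, Matrix.of_apply,
        add_mul, Finset.sum_add_distrib]
      congr 1
      · rw [Finset.sum_comm]
        congr 1; funext k
        rw [Finset.sum_congr rfl (fun v _ => ?_), Finset.sum_ite_eq' Finset.univ
          (⟨(e : Fin n × Fin n).1, h1⟩ : ↥S) (fun v => p (e : Fin n × Fin n).2 k * (Phi S p a) (v, k))]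
        · simp
        · by_cases hv : v = (⟨(e : Fin n × Fin n).1, h1⟩ : ↥S)
          · subst hv; simp
          · have hv' : (v : Fin n) ≠ (e : Fin n × Fin n).1 := fun hh => hv (Subtype.ext hh)
            simp [hv, hv']
      · rw [Finset.sum_comm]
        congr 1; funext k
        rw [Finset.sum_congr rfl (fun v _ => ?_), Finset.sum_ite_eq' Finset.univ
          (⟨(e : Fin n × Fin n).2, h2⟩ : ↥S) (fun v => p (e : Fin n × Fin n).1 k * (Phi S p a) (v, k))]
        · simp
        · by_cases hv : v = (⟨(e : Fin n × Fin n).2, h2⟩ : ↥S)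
          · subst hv; simp
          · have hv' : (v : Fin n) ≠ (e : Fin n × Fin n).2 := fun hh => hv (Subtype.ext hh)
            simp [hv, hv']
    rw [Pi.zero_apply, expand]
    simp only [Phi, LinearMap.coe_mk, AddHom.coe_mk]
    set q1 := p (e : Fin n × Fin n).1
    set q2 := p (e : Fin n × Fin n).2
    have reorg : ∑ k, q2 k * (∑ j, Amat a k j * q1 j) + ∑ k, q1 k * (∑ j, Amat a k j * q2 j)
        = ∑ k, ∑ j, Amat a k j * (q2 k * q1 j + q1 k * q2 j) := by
      rw [← Finset.sum_add_distrib]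
      congr 1; funext k
      rw [Finset.mul_sum, Finset.mul_sum, ← Finset.sum_add_distrib]
      congr 1; funext j
      ring
    rw [reorg]
    set f : Fin d → Fin d → ℝ := fun k j => Amat a k j * (q2 k * q1 j + q1 k * q2 j) with hf
    have hanti : ∀ k j, f k j = - f j k := by
      intro k j; rw [hf]; simp only; rw [Amat_anti]; ring
    have hT : (∑ k, ∑ j, f k j) = - ∑ k, ∑ j, f k j := by
      conv_lhs => rw [Finset.sum_comm]
      calc (∑ j, ∑ k, f k j) = ∑ j, ∑ k, -(f j k) := by
            exact Finset.sum_congr rfl fun j _ => Finset.sum_congr rfl fun k _ => hanti k j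
        _ = - ∑ j, ∑ k, f j k := by simp [Finset.sum_neg_distrib]
    linarith
  have hrangePhi : LinearMap.range (Phi S p) ≤ LinearMap.ker M.mulVecLin := by
    rintro x ⟨a, rfl⟩
    exact hkerPhi a
  have hkdim : d * (d - 1) / 2 ≤ Module.finrank ℝ (LinearMap.ker M.mulVecLin) := by
    have h1 := LinearMap.finrank_range_of_inj (Phi_injective S p hspan)
    have h2 := Submodule.finrank_mono hrangePhi
    rw [h1] at h2
    rwa [Module.finrank_pi, card_low] at h2
  have hrn : M.rank + Module.finrank ℝ (LinearMap.ker M.mulVecLin) = S.card * d := by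
    have := LinearMap.finrank_range_add_finrank_ker M.mulVecLin
    rwa [Module.finrank_pi, Fintype.card_prod, Fintype.card_coe, Fintype.card_fin] at this
  rw [mul_comm d S.card]
  rw [hrk] at hrn
  omega

end aux

/-- If G is minimally Gram locally completable in rank d at a generic configuration,
then |E| = dn − d(d−1)/2 and every induced subgraph on n' ≥ d vertices has at most
dn' − d(d−1)/2 edges. -/
theorem stmt_7 (n d : ℕ) (hd : d ≤ n) (E : Finset (Fin n × Fin n)) (p : Fin n → Fin d → ℝ)
    (hgen : ∀ S : Finset (Fin n), d ≤ S.card → Submodule.span ℝ (p '' ↑S) = ⊤)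
    (hrank : (completionMatrix E p).rank = d * n - d * (d - 1) / 2)
    (hmin : ∀ e ∈ E, (completionMatrix (E.erase e) p).rank < d * n - d * (d - 1) / 2) :
    E.card = d * n - d * (d - 1) / 2 ∧
    ∀ S : Finset (Fin n), d ≤ S.card →
      (E.filter fun e => e.1 ∈ S ∧ e.2 ∈ S).card ≤ d * S.card - d * (d - 1) / 2 := by
  classical
  set C := completionMatrix E p with hC
  have hindE : LinearIndependent ℝ C := by
    refine linearIndependent_iff_notMem_span.mpr ?_
    intro i hi
    have hre : (completionMatrix (E.erase ↑i) p).rank = C.rank := by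
      rw [Matrix.rank_eq_finrank_span_row, Matrix.rank_eq_finrank_span_row]
      have himg : Set.range (completionMatrix (E.erase ↑i) p) = C '' (Set.univ \ {i}) := by
        ext x
        constructor
        · rintro ⟨⟨e, he⟩, rfl⟩
          refine ⟨⟨e, Finset.mem_of_mem_erase he⟩, ⟨trivial, ?_⟩, rfl⟩
          simp only [Set.mem_singleton_iff]
          intro hh
          exact (Finset.ne_of_mem_erase he) (by rw [← Subtype.coe_inj] at hh; exact hh)
        · rintro ⟨⟨e, he⟩, ⟨-, hne⟩, rfl⟩
          have hne' : e ≠ ↑i := by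
            intro hh
            exact hne (by simp only [Set.mem_singleton_iff]; exact Subtype.ext hh)
          exact ⟨⟨e, Finset.mem_erase.2 ⟨hne', he⟩⟩, rfl⟩
      have hsp : Submodule.span ℝ (Set.range (completionMatrix (E.erase ↑i) p)) =
          Submodule.span ℝ (Set.range C) := by
        rw [himg]
        have : Set.range C = C '' (insert i (Set.univ \ {i})) := by
          rw [Set.insert_diff_singleton, Set.insert_eq_self.2 (Set.mem_univ i)]; exact Set.image_univ.symm
        rw [this]; exact (Submodule.span_insert_eq_span hi).symm.trans (congrArg (Submodule.span ℝ) (Set.image_insert_eq (f := (C : E → Fin n × Fin d → ℝ))).symm)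
      exact congrArg (fun s : Submodule ℝ (Fin n × Fin d → ℝ) => Module.finrank ℝ s) hsp
    have hlt := hmin ↑i i.2
    rw [hre, hrank] at hlt
    exact lt_irrefl _ hlt
  constructor
  · have h1 : C.rank = Fintype.card E := hindE.rank_matrix
    rw [hrank, Fintype.card_coe] at h1
    exact h1.symm
  · intro S hS
    set F := E.filter (fun e => e.1 ∈ S ∧ e.2 ∈ S) with hF
    apply key_card_le p F S
    · intro e he
      exact (Finset.mem_filter.1 he).2
    · exact hgen S hS
    · set emb : {e // e ∈ F} → {e // e ∈ E} :=
        fun e => ⟨↑e, (Finset.mem_filter.1 e.2).1⟩ with hemb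
      have hinj : Function.Injective emb := by
        intro a b hab
        have h2 : (emb a).val = (emb b).val := by rw [hab]
        exact Subtype.ext h2
      have : completionMatrix F p = C ∘ emb := by
        funext e kl
        rfl
      rw [this]
      exact hindE.comp emb hinj
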